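/- In dimension d = 3, let ω : (0,1] → [0,∞) be measurable with ω(r) ≥ m r^{−3−2α} for all r ∈ (0,1), where α ∈ (0,1) and m > 0, and suppose r²ω(r)(1−cos(rc)) is integrable for each c. Define λ_δ(ξ) for ξ ∈ ℝ³ with kernel ω_δ(r) = δ^{−5} ω(r/δ). Then there is C > 0 independent of δ ∈ (0,1) and ξ such that λ_δ(ξ) ≥ C |ξ|^{2α} / δ^{2−2α} whenever δ|ξ| ≥ 1. -/

import Mathlib

open MeasureTheory Real Set Metric

open scoped Pointwise

local notation "E3" => EuclideanSpace ℝ (Fin 3)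

lemma cos_le_min (x : ℝ) : 1 - Real.cos x ≤ min 2 (x^2/2) := by
  refine le_min (by nlinarith [Real.neg_one_le_cos x]) (by nlinarith [Real.one_sub_sq_div_two_le_cos (x := x)])

lemma cos_ge_of_le_one {x : ℝ} (hx : |x| ≤ 1) : (43/96) * x^2 ≤ 1 - Real.cos x := by
  have h := Real.cos_bound hx
  have hx2 : x^2 ≤ 1 := by nlinarith [sq_abs x, abs_nonneg x]
  have h2 : |x|^4 ≤ x^2 := by
    have e : |x|^4 = (x^2)^2 := by rw [← sq_abs x]; ring
    rw [e]; nlinarith [sq_nonneg x]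
  have := abs_le.1 h
  nlinarith

lemma exists_eps (c : ℝ) : ∃ ε : ℝ, 0 < ε ∧ ∀ x ∈ Icc (1:ℝ) c,
    ε ≤ (1 - Real.cos x) + (1 - Real.cos (Real.sqrt 2 * x)) := by
  rcases lt_or_ge c 1 with hc | hc
  · exact ⟨1, one_pos, fun x hx => absurd (hx.1.trans hx.2) (not_le.2 hc)⟩
  have hne : (Icc (1:ℝ) c).Nonempty := ⟨1, le_refl 1, hc⟩
  have hcont : ContinuousOn (fun x : ℝ => (1 - Real.cos x) + (1 - Real.cos (Real.sqrt 2 * x)))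
      (Icc 1 c) := (Continuous.continuousOn (by continuity))
  obtain ⟨x₀, hx₀, hmin⟩ := isCompact_Icc.exists_isMinOn hne hcont
  refine ⟨_, ?_, fun x hx => hmin hx⟩
  have h1 : 0 ≤ 1 - Real.cos x₀ := by nlinarith [Real.cos_le_one x₀]
  have h2 : 0 ≤ 1 - Real.cos (Real.sqrt 2 * x₀) := by nlinarith [Real.cos_le_one (Real.sqrt 2 * x₀)]
  rcases h1.lt_or_eq with h | h
  · positivity
  rcases h2.lt_or_eq with h' | h'
  · positivity
  exfalso
  obtain ⟨n, hn⟩ := (Real.cos_eq_one_iff x₀).1 (by linarith)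
  obtain ⟨k, hk⟩ := (Real.cos_eq_one_iff (Real.sqrt 2 * x₀)).1 (by linarith)
  have hx₀pos : (0:ℝ) < x₀ := lt_of_lt_of_le one_pos hx₀.1
  have hnne : (n:ℝ) ≠ 0 := by
    intro h0
    rw [h0, zero_mul] at hn
    linarith [hn ▸ hx₀pos]
  have hpi : (0:ℝ) < 2 * Real.pi := by positivity
  have key : Real.sqrt 2 * n = k := by
    have h0 : Real.sqrt 2 * ((n:ℝ) * (2 * Real.pi)) = (k:ℝ) * (2 * Real.pi) := by rw [hn, hk]
    have h2π : (2 * Real.pi) ≠ 0 := by positivity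
    apply mul_right_cancel₀ h2π
    linear_combination h0
  have : Real.sqrt 2 = (k:ℝ) / (n:ℝ) := by field_simp [hnne] at key ⊢; linarith [key]
  have : Real.sqrt 2 = ((k / n : ℚ) : ℝ) := by push_cast; exact this
  exact (Rat.not_irrational _) (this ▸ irrational_sqrt_two)

lemma min_cos_bound (c : ℝ) (hc : 1 ≤ c) : ∃ K : ℝ, 0 < K ∧ ∀ u ∈ Ioc (0:ℝ) 1,
    min 2 ((c*u)^2/2) ≤ K * ((1 - Real.cos (u*c)) + (1 - Real.cos (u*(Real.sqrt 2*c)))) := by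
  obtain ⟨ε, hε, heps⟩ := exists_eps c
  refine ⟨max (48/43) (2/ε), lt_of_lt_of_le (by norm_num) (le_max_left _ _), fun u hu => ?_⟩
  have hc0 : (0:ℝ) < c := lt_of_lt_of_le one_pos hc
  have hcu : 0 < c * u := mul_pos hc0 hu.1
  have hA : 0 ≤ 1 - Real.cos (u*c) := by nlinarith [Real.cos_le_one (u*c)]
  have hB : 0 ≤ 1 - Real.cos (u*(Real.sqrt 2*c)) := by nlinarith [Real.cos_le_one (u*(Real.sqrt 2*c))]
  rcases le_or_gt (c*u) 1 with h | h
  · have := cos_ge_of_le_one (x := c*u) (by rw [abs_of_pos hcu]; exact h)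
    calc min 2 ((c*u)^2/2) ≤ (c*u)^2/2 := min_le_right _ _
      _ ≤ (48/43) * (1 - Real.cos (u*c)) := by rw [mul_comm u c]; nlinarith
      _ ≤ max (48/43) (2/ε) * ((1 - Real.cos (u*c)) + (1 - Real.cos (u*(Real.sqrt 2*c)))) := by
          refine mul_le_mul (le_max_left _ _) (by linarith) (by linarith) ?_
          exact le_trans (by norm_num) (le_max_left _ _)
  · have hx : c*u ∈ Icc (1:ℝ) c := ⟨h.le, by nlinarith [hu.2]⟩
    have := heps (c*u) hx
    have h2e : 0 < 2/ε := by positivity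
    calc min 2 ((c*u)^2/2) ≤ 2 := min_le_left _ _
      _ ≤ (2/ε) * ((1 - Real.cos (u*c)) + (1 - Real.cos (u*(Real.sqrt 2*c)))) := by
          rw [div_mul_eq_mul_div, le_div_iff₀ hε]
          have e1 : u * c = c * u := mul_comm u c
          have e2 : u * (Real.sqrt 2 * c) = Real.sqrt 2 * (c * u) := by ring
          rw [e1, e2]; nlinarith
      _ ≤ max (48/43) (2/ε) * ((1 - Real.cos (u*c)) + (1 - Real.cos (u*(Real.sqrt 2*c)))) := by
          refine mul_le_mul (le_max_right _ _) le_rfl (by linarith) ?_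
          exact le_trans h2e.le (le_max_right _ _)

lemma oneD_integrable (ω : ℝ → ℝ) (hmeas : Measurable ω)
    (hnonneg : ∀ r ∈ Ioc (0:ℝ) 1, 0 ≤ ω r)
    (hint : ∀ c : ℝ, IntegrableOn (fun r => r ^ 2 * ω r * (1 - Real.cos (r * c))) (Ioo 0 1))
    (c : ℝ) (hc : 1 ≤ c) :
    IntegrableOn (fun u => u^2 * ω u * min 2 ((c*u)^2/2)) (Ioo 0 1) := by
  obtain ⟨K, hK, hKb⟩ := min_cos_bound c hc
  have hgi : Integrable (fun u => K * ((u ^ 2 * ω u * (1 - Real.cos (u * c)))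
      + (u ^ 2 * ω u * (1 - Real.cos (u * (Real.sqrt 2 * c))))))
      (volume.restrict (Ioo (0:ℝ) 1)) := ((hint c).add (hint (Real.sqrt 2 * c))).const_mul K
  refine Integrable.mono' hgi ?_ ?_
  · exact (((measurable_id.pow_const 2).mul hmeas).mul
      ((measurable_const.min (((measurable_const.mul measurable_id).pow_const 2).div_const 2)))).aestronglyMeasurable
  · filter_upwards [ae_restrict_mem measurableSet_Ioo] with u hu
    have hu' : u ∈ Ioc (0:ℝ) 1 := ⟨hu.1, hu.2.le⟩
    have hω : 0 ≤ ω u := hnonneg u hu'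
    have hmin : 0 ≤ min 2 ((c*u)^2/2) := le_min (by norm_num) (by positivity)
    have hb := hKb u hu'
    rw [Real.norm_eq_abs, abs_of_nonneg (by positivity)]
    calc u^2 * ω u * min 2 ((c*u)^2/2)
        ≤ u^2 * ω u * (K * ((1 - Real.cos (u*c)) + (1 - Real.cos (u*(Real.sqrt 2*c))))) := by
          apply mul_le_mul_of_nonneg_left hb (by positivity)
      _ = K * ((u ^ 2 * ω u * (1 - Real.cos (u * c)))
          + (u ^ 2 * ω u * (1 - Real.cos (u * (Real.sqrt 2 * c))))) := by ring

lemma subst_integrable (Φ : ℝ → ℝ) (hΦ : IntegrableOn Φ (Ioo 0 1)) {δ : ℝ} (hδ : 0 < δ) :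
    IntegrableOn (fun r => Φ (r/δ)) (Ioc 0 δ) := by
  have h1 : IntegrableOn Φ (Ioc 0 1) := by
    refine IntegrableOn.congr_set_ae hΦ ?_
    exact (Ioo_ae_eq_Ioc (a := (0:ℝ)) (b := 1)).symm
  have h2 : IntervalIntegrable Φ volume 0 1 :=
    (intervalIntegrable_iff_integrableOn_Ioc_of_le zero_le_one).2 h1
  have h3 := h2.comp_mul_left (c := δ⁻¹)
  rw [zero_div, one_div, inv_inv] at h3
  have h4 : IntervalIntegrable (fun r => Φ (r/δ)) volume 0 δ := by
    have : (fun r : ℝ => Φ (r/δ)) = fun x => Φ (δ⁻¹ * x) := by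
      funext x; rw [div_eq_inv_mul]
    rw [this]; exact h3
  exact (intervalIntegrable_iff_integrableOn_Ioc_of_le hδ.le).1 h4

lemma lintegral_radial3 (g : ℝ → ENNReal) (hg : Measurable g) :
    ∫⁻ x : E3, g ‖x‖ =
      (volume : Measure E3).toSphere univ * ∫⁻ r in Ioi (0:ℝ), ENNReal.ofReal (r^2) * g r := by
  have hdim : Module.finrank ℝ E3 = 3 := finrank_euclideanSpace_fin
  have h1 : ∫⁻ x : E3, g ‖x‖ = ∫⁻ x : ({(0:E3)}ᶜ : Set E3), g ‖(x : E3)‖ ∂(volume.comap Subtype.val) := by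
    rw [lintegral_subtype_comap (measurableSet_singleton (0:E3)).compl (fun y => g ‖y‖), MeasureTheory.restrict_compl_singleton]
  have hmeas2 : Measurable fun p : sphere (0:E3) 1 × Ioi (0:ℝ) => g p.2 :=
    hg.comp (measurable_subtype_coe.comp measurable_snd)
  have h2 := (Measure.measurePreserving_homeomorphUnitSphereProd
      (volume : Measure E3)).lintegral_comp hmeas2
  have h3 : ∫⁻ x : ({(0:E3)}ᶜ : Set E3), g ‖(x : E3)‖ ∂(volume.comap Subtype.val) =
      ∫⁻ p : sphere (0:E3) 1 × Ioi (0:ℝ), g p.2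
        ∂((volume : Measure E3).toSphere.prod (.volumeIoiPow (Module.finrank ℝ E3 - 1))) := by
    rw [← h2]; congr 1; funext x; simp [homeomorphUnitSphereProd, homeomorphSphereProd]
  have h4 : ∫⁻ p : sphere (0:E3) 1 × Ioi (0:ℝ), g p.2
        ∂((volume : Measure E3).toSphere.prod (.volumeIoiPow (Module.finrank ℝ E3 - 1))) =
      (volume : Measure E3).toSphere univ *
        ∫⁻ r : Ioi (0:ℝ), g r ∂(Measure.volumeIoiPow 2) := by
    rw [lintegral_prod _ hmeas2.aemeasurable, hdim]
    simp [lintegral_const, mul_comm]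
  have h5 : ∫⁻ r : Ioi (0:ℝ), g r ∂(Measure.volumeIoiPow 2) =
      ∫⁻ r in Ioi (0:ℝ), ENNReal.ofReal (r^2) * g r := by
    rw [Measure.volumeIoiPow, lintegral_withDensity_eq_lintegral_mul _
      ((measurable_subtype_coe.pow_const 2).ennreal_ofReal) (show Measurable fun r : Ioi (0:ℝ) => g r from hg.comp measurable_subtype_coe)]
    simp only [Pi.mul_apply]
    rw [lintegral_subtype_comap measurableSet_Ioi (fun r => ENNReal.ofReal (r^2) * g r)]
  rw [h1, h3, h4, h5]

lemma integrableOn_closedBall_of_radial_bound (R : ℝ) (g : ℝ → ℝ) (hg : Measurable g)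
    (h1 : IntegrableOn (fun r => r^2 * g r) (Ioc 0 R))
    (f : E3 → ℝ)
    (hf : AEStronglyMeasurable f (volume.restrict (closedBall 0 R)))
    (hbound : ∀ s : E3, s ∈ closedBall (0:E3) R → s ≠ 0 → ‖f s‖ ≤ g ‖s‖) :
    IntegrableOn f (closedBall (0:E3) R) := by
  refine ⟨hf, ?_⟩
  show (∫⁻ s in closedBall (0:E3) R, (‖f s‖₊ : ENNReal) ∂volume) < ⊤
  set G : ℝ → ENNReal := indicator (Ioc 0 R) (fun r => ENNReal.ofReal (g r)) with hG
  have hGmeas : Measurable G := (hg.ennreal_ofReal).indicator measurableSet_Ioc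
  have key : ∫⁻ s in closedBall (0:E3) R, (‖f s‖₊ : ENNReal) ∂volume ≤ ∫⁻ s : E3, G ‖s‖ := by
    refine le_trans (lintegral_mono_ae ?_) (setLIntegral_le_lintegral _ _)
    have h0 : ∀ᵐ s : E3 ∂(volume.restrict (closedBall 0 R)), s ≠ 0 :=
      ae_restrict_of_ae (by
        rw [ae_iff]
        simpa using measure_singleton (0 : E3))
    filter_upwards [ae_restrict_mem measurableSet_closedBall, h0] with s hs hs0
    have hmem : ‖s‖ ∈ Ioc (0:ℝ) R := ⟨norm_pos_iff.2 hs0, by simpa [dist_eq_norm] using hs⟩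
    rw [hG, indicator_of_mem hmem, ← ENNReal.ofReal_coe_nnreal, coe_nnnorm]
    exact ENNReal.ofReal_le_ofReal (hbound s hs hs0)
  refine lt_of_le_of_lt key ?_
  rw [lintegral_radial3 G hGmeas]
  refine ENNReal.mul_lt_top (measure_lt_top _ _) ?_
  have hb : ∀ r : ℝ, ENNReal.ofReal (r^2) * G r ≤
      indicator (Ioc 0 R) (fun r => (‖r^2 * g r‖₊ : ENNReal)) r := by
    intro r
    by_cases hr : r ∈ Ioc (0:ℝ) R
    · rw [hG, indicator_of_mem hr, indicator_of_mem hr, ← ENNReal.ofReal_mul (sq_nonneg r),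
        ← ENNReal.ofReal_coe_nnreal, coe_nnnorm]
      exact ENNReal.ofReal_le_ofReal (le_abs_self _)
    · simp [hG, indicator_of_notMem hr]
  refine lt_of_le_of_lt (lintegral_mono hb) ?_
  rw [lintegral_indicator measurableSet_Ioc _, Measure.restrict_restrict measurableSet_Ioc,
    inter_eq_left.2 Ioc_subset_Ioi_self]
  exact h1.2

noncomputable def e₀ : E3 := EuclideanSpace.single (0 : Fin 3) (1:ℝ)

lemma e₀_norm : ‖e₀‖ = 1 := by
  rw [e₀, EuclideanSpace.norm_single]; norm_num

-- integrability of the model integrand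
lemma h_int (α : ℝ) (hα : α ∈ Ioo (0:ℝ) 1) (C R : ℝ) (hC : 0 ≤ C) (hR : 0 < R) (ξ : E3) :
    IntegrableOn (fun t : E3 => C * (‖t‖ ^ (-3-2*α) * (1 - Real.cos (inner ℝ ξ t : ℝ))))
      (closedBall (0:E3) R) := by
  refine integrableOn_closedBall_of_radial_bound R
    (fun r => C * (r ^ (-3-2*α) * ((‖ξ‖*r)^2/2))) ?_ ?_ _ ?_ ?_
  · have hrm : Measurable fun x : ℝ => x ^ (-3-2*α) := by measurability
    exact measurable_const.mul (hrm.mul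
      (((measurable_const.mul measurable_id).pow_const 2).div_const 2))
  · have hrp : IntegrableOn (fun r : ℝ => r ^ (1-2*α)) (Ioc 0 R) := by
      refine (intervalIntegrable_iff_integrableOn_Ioc_of_le hR.le).1 ?_
      exact intervalIntegral.intervalIntegrable_rpow' (by linarith [hα.2])
    have h5 : IntegrableOn (fun r : ℝ => C * ‖ξ‖^2 / 2 * r ^ (1-2*α)) (Ioc 0 R) :=
      hrp.const_mul (C * ‖ξ‖^2 / 2)
    refine h5.congr_fun ?_ measurableSet_Ioc
    intro r hr
    have hr0 : (0:ℝ) < r := hr.1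
    have key : r ^ (-3-2*α) * r^2 * r^2 = r ^ (1-2*α) := by
      rw [← Real.rpow_natCast r 2, ← Real.rpow_add hr0, ← Real.rpow_add hr0]
      congr 1; push_cast; ring
    show C * ‖ξ‖^2/2 * r ^ (1-2*α) = r^2 * (C * (r ^ (-3-2*α) * ((‖ξ‖*r)^2/2)))
    linear_combination (-(C * ‖ξ‖^2/2)) * key
  · refine Measurable.aestronglyMeasurable ?_
    have hin : Measurable fun t : E3 => (inner ℝ ξ t : ℝ) :=
      (Continuous.inner continuous_const continuous_id).measurable
    have hrm : Measurable fun x : ℝ => x ^ (-3-2*α) := by measurability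
    exact measurable_const.mul ((hrm.comp measurable_norm).mul
      (measurable_const.sub (Real.measurable_cos.comp hin)))
  · intro s hs hs0
    have h1 : (0:ℝ) ≤ ‖s‖ ^ (-3-2*α) := Real.rpow_nonneg (norm_nonneg s) _
    have h2 : 0 ≤ 1 - Real.cos (inner ℝ ξ s : ℝ) := by nlinarith [Real.cos_le_one (inner ℝ ξ s : ℝ)]
    have h3 : 1 - Real.cos (inner ℝ ξ s : ℝ) ≤ (‖ξ‖*‖s‖)^2/2 := by
      have := Real.one_sub_sq_div_two_le_cos (x := (inner ℝ ξ s : ℝ))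
      have hcs := abs_real_inner_le_norm ξ s
      nlinarith [abs_nonneg (inner ℝ ξ s : ℝ), sq_abs (inner ℝ ξ s : ℝ)]
    rw [Real.norm_eq_abs, abs_of_nonneg (by positivity)]
    exact mul_le_mul_of_nonneg_left (mul_le_mul_of_nonneg_left h3 h1) hC

lemma I_rot (α : ℝ) (e : E3) (he : ‖e‖ = 1) :
    ∫ t in closedBall (0:E3) 1, ‖t‖ ^ (-3-2*α) * (1 - Real.cos (inner ℝ e t : ℝ)) =
    ∫ t in closedBall (0:E3) 1, ‖t‖ ^ (-3-2*α) * (1 - Real.cos (inner ℝ e₀ t : ℝ)) := by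
  set T : E3 ≃ₗᵢ[ℝ] E3 := Submodule.reflection (ℝ ∙ (e₀ - e))ᗮ with hT
  have hTe : T e₀ = e := Submodule.reflection_sub (by rw [e₀_norm, he])
  have hmp : MeasurePreserving T volume volume := T.measurePreserving
  have hemb : MeasurableEmbedding T := T.toHomeomorph.measurableEmbedding
  have key := hmp.setIntegral_preimage_emb hemb
    (fun t => ‖t‖ ^ (-3-2*α) * (1 - Real.cos (inner ℝ e t : ℝ))) (closedBall (0:E3) 1)
  have hpre : T ⁻¹' (closedBall (0:E3) 1) = closedBall (0:E3) 1 := by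
    ext x
    simp [mem_closedBall, dist_eq_norm, T.norm_map]
  rw [hpre] at key
  rw [← key]
  refine setIntegral_congr_fun measurableSet_closedBall (fun x _ => ?_)
  have h1 : ‖T x‖ = ‖x‖ := T.norm_map x
  have h2 : (inner ℝ e (T x) : ℝ) = (inner ℝ e₀ x : ℝ) := by
    rw [← hTe]; exact T.inner_map_map e₀ x
  rw [h1, h2]

lemma I_pos (α : ℝ) (hα : α ∈ Ioo (0:ℝ) 1) :
    0 < ∫ t in closedBall (0:E3) 1, ‖t‖ ^ (-3-2*α) * (1 - Real.cos (inner ℝ e₀ t : ℝ)) := by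
  have hnn : ∀ t : E3, 0 ≤ ‖t‖ ^ (-3-2*α) * (1 - Real.cos (inner ℝ e₀ t : ℝ)) := by
    intro t
    have := Real.cos_le_one (inner ℝ e₀ t : ℝ)
    have := Real.rpow_nonneg (norm_nonneg t) (-3-2*α)
    nlinarith
  have hint : IntegrableOn (fun t : E3 => ‖t‖ ^ (-3-2*α) * (1 - Real.cos (inner ℝ e₀ t : ℝ)))
      (closedBall (0:E3) 1) := by
    have := h_int α hα 1 1 zero_le_one one_pos e₀
    simpa using this
  rw [setIntegral_pos_iff_support_of_nonneg_ae (ae_of_all _ hnn) hint]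
  have hnull : volume ({t : E3 | (inner ℝ e₀ t : ℝ) = 0}) = 0 := by
    have : ({t : E3 | (inner ℝ e₀ t : ℝ) = 0}) = ((ℝ ∙ e₀)ᗮ : Submodule ℝ E3) := by
      ext t
      simp [Submodule.mem_orthogonal_singleton_iff_inner_right]
    rw [this]
    refine Measure.addHaar_submodule _ _ ?_
    intro h
    have he₀ : e₀ ∈ ((ℝ ∙ e₀)ᗮ : Submodule ℝ E3) := h ▸ Submodule.mem_top
    have := Submodule.mem_orthogonal_singleton_iff_inner_right.1 he₀
    rw [real_inner_self_eq_norm_sq, e₀_norm] at this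
    norm_num at this
  have hsub : closedBall (0:E3) 1 \ {t : E3 | (inner ℝ e₀ t : ℝ) = 0} ⊆
      Function.support (fun t : E3 => ‖t‖ ^ (-3-2*α) * (1 - Real.cos (inner ℝ e₀ t : ℝ)))
        ∩ closedBall (0:E3) 1 := by
    rintro t ⟨ht, ht0⟩
    simp only [mem_setOf_eq] at ht0
    refine ⟨?_, ht⟩
    have htne : t ≠ 0 := by
      intro h; rw [h] at ht0; simp at ht0
    have hp : 0 < ‖t‖ ^ (-3-2*α) := Real.rpow_pos_of_pos (norm_pos_iff.2 htne) _
    have habs : |(inner ℝ e₀ t : ℝ)| ≤ 1 := by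
      refine le_trans (abs_real_inner_le_norm e₀ t) ?_
      rw [e₀_norm, one_mul]
      simpa [dist_eq_norm] using ht
    have hcos : Real.cos (inner ℝ e₀ t : ℝ) < 1 := by
      rcases lt_or_eq_of_le (Real.cos_le_one (inner ℝ e₀ t : ℝ)) with h | h
      · exact h
      · exfalso
        have hpi : (1:ℝ) < 2 * Real.pi := by nlinarith [Real.pi_gt_three]
        have := (Real.cos_eq_one_iff_of_lt_of_lt
          (by cases' abs_le.1 habs with h1 h2; linarith)
          (by cases' abs_le.1 habs with h1 h2; linarith)).1 h
        exact ht0 this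
    have : 0 < ‖t‖ ^ (-3-2*α) * (1 - Real.cos (inner ℝ e₀ t : ℝ)) := by nlinarith
    exact ne_of_gt this
  calc (0:ENNReal) < volume (closedBall (0:E3) 1) := by
        refine lt_of_lt_of_le (measure_ball_pos volume (0:E3) one_pos) (measure_mono ball_subset_closedBall)
    _ = volume (closedBall (0:E3) 1 \ {t : E3 | (inner ℝ e₀ t : ℝ) = 0}) :=
        (measure_diff_null hnull).symm
    _ ≤ _ := measure_mono hsub



theorem stmt10 (α m : ℝ) (hα : α ∈ Ioo (0:ℝ) 1) (hm : 0 < m)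
    (ω : ℝ → ℝ)
    (hmeas : Measurable ω)
    (hnonneg : ∀ r ∈ Ioc (0:ℝ) 1, 0 ≤ ω r)
    (hlb : ∀ r ∈ Ioo (0:ℝ) 1, m * r ^ (-3 - 2 * α) ≤ ω r)
    (hint : ∀ c : ℝ, IntegrableOn (fun r => r ^ 2 * ω r * (1 - Real.cos (r * c))) (Ioo 0 1)) :
    ∃ C : ℝ, 0 < C ∧ ∀ δ ∈ Ioo (0:ℝ) 1, ∀ ξ : EuclideanSpace ℝ (Fin 3),
      1 ≤ δ * ‖ξ‖ →
      C * ‖ξ‖ ^ (2 * α) / δ ^ (2 - 2 * α) ≤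
        ∫ s in Metric.closedBall (0 : EuclideanSpace ℝ (Fin 3)) δ,
          δ ^ (-5 : ℤ) * ω (‖s‖ / δ) * (1 - Real.cos (inner ℝ ξ s : ℝ)) := by
  obtain ⟨hα0, hα1⟩ := hα
  set C₀ : ℝ := ∫ t in closedBall (0:E3) 1, ‖t‖ ^ (-3-2*α) * (1 - Real.cos (inner ℝ e₀ t : ℝ))
    with hC₀
  have hC₀pos : 0 < C₀ := I_pos α ⟨hα0, hα1⟩
  refine ⟨m * C₀, mul_pos hm hC₀pos, ?_⟩
  intro δ hδ ξ hξ
  have hδ0 : 0 < δ := hδ.1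
  set a : ℝ := ‖ξ‖ with ha
  have ha0 : 0 < a := by nlinarith [hδ.2, norm_nonneg ξ]
  have hainv : a⁻¹ ≤ δ := by
    rw [← one_div, div_le_iff₀ ha0]; exact hξ
  set f : E3 → ℝ := fun s => δ ^ (-5:ℤ) * ω (‖s‖/δ) * (1 - Real.cos (inner ℝ ξ s : ℝ)) with hfd
  set Cg : ℝ := m * δ ^ (2*α - 2) with hCgd
  have hCg0 : 0 ≤ Cg := by positivity
  set g : E3 → ℝ := fun s => Cg * (‖s‖ ^ (-3-2*α) * (1 - Real.cos (inner ℝ ξ s : ℝ))) with hgd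
  have hδ5 : (δ:ℝ) ^ (-5:ℤ) = δ ^ ((-5:ℝ)) := by
    rw [← Real.rpow_intCast δ (-5)]; norm_num
  have hδ5pos : (0:ℝ) < δ ^ (-5:ℤ) := zpow_pos hδ0 _
  -- Step 2 : integrability of f
  have hc1 : (1:ℝ) ≤ a * δ := by rw [mul_comm]; exact hξ
  have hΦ := oneD_integrable ω hmeas hnonneg hint (a*δ) hc1
  have hsubst := subst_integrable _ hΦ hδ0
  set gD : ℝ → ℝ := fun r => δ ^ (-5:ℤ) * ω (r/δ) * min 2 ((a*r)^2/2) with hgDd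
  have hgDmeas : Measurable gD := by
    refine (measurable_const.mul (hmeas.comp (measurable_id.div_const δ))).mul ?_
    exact measurable_const.min (((measurable_const.mul measurable_id).pow_const 2).div_const 2)
  have h1D : IntegrableOn (fun r => r^2 * gD r) (Ioc 0 δ) := by
    have hF : IntegrableOn (fun r => (δ ^ (-5:ℤ) * δ^2) *
        ((fun u => u^2 * ω u * min 2 (((a*δ)*u)^2/2)) (r/δ))) (Ioc 0 δ) :=
      hsubst.const_mul _
    refine hF.congr_fun ?_ measurableSet_Ioc
    intro r hr
    have hδne : δ ≠ 0 := hδ0.ne'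
    have e1 : a * δ * (r/δ) = a * r := by field_simp <;> ring
    have e2 : (r/δ)^2 * δ^2 = r^2 := by field_simp
    show (δ:ℝ)^(-5:ℤ) * δ^2 * ((r/δ)^2 * ω (r/δ) * min 2 ((a*δ*(r/δ))^2/2))
        = r^2 * (δ^(-5:ℤ) * ω (r/δ) * min 2 ((a*r)^2/2))
    rw [e1, ← e2]; ring
  have hfmeas : Measurable f := by
    have hin : Measurable fun t : E3 => (inner ℝ ξ t : ℝ) :=
      (Continuous.inner continuous_const continuous_id).measurable
    exact (measurable_const.mul (hmeas.comp (measurable_norm.div_const δ))).mul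
      (measurable_const.sub (Real.measurable_cos.comp hin))
  have hfi : IntegrableOn f (closedBall (0:E3) δ) := by
    refine integrableOn_closedBall_of_radial_bound δ gD hgDmeas h1D f
      hfmeas.aestronglyMeasurable ?_
    intro s hs hs0
    have hsn : 0 < ‖s‖ := norm_pos_iff.2 hs0
    have hsδ : ‖s‖ ≤ δ := by simpa [dist_eq_norm] using hs
    have hω : 0 ≤ ω (‖s‖/δ) := hnonneg _ ⟨div_pos hsn hδ0, (div_le_one hδ0).2 hsδ⟩
    have hcos : 0 ≤ 1 - Real.cos (inner ℝ ξ s : ℝ) := by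
      nlinarith [Real.cos_le_one (inner ℝ ξ s : ℝ)]
    have hmin : 1 - Real.cos (inner ℝ ξ s : ℝ) ≤ min 2 ((a*‖s‖)^2/2) := by
      refine le_trans (cos_le_min _) (min_le_min le_rfl ?_)
      have hCS : |(inner ℝ ξ s : ℝ)| ≤ a * ‖s‖ := abs_real_inner_le_norm ξ s
      have : (inner ℝ ξ s : ℝ)^2 ≤ (a*‖s‖)^2 := by
        rw [← sq_abs]
        exact pow_le_pow_left₀ (abs_nonneg _) hCS 2
      linarith
    rw [Real.norm_eq_abs, hfd, abs_of_nonneg (by positivity)]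
    exact mul_le_mul_of_nonneg_left hmin (by positivity)
  -- Step 3 : integrability of g
  have hgi : IntegrableOn g (closedBall (0:E3) δ) := h_int α ⟨hα0, hα1⟩ Cg δ hCg0 hδ0 ξ
  -- Step 4 : pointwise comparison
  have hfg : ∫ s in closedBall (0:E3) δ, g s ≤ ∫ s in closedBall (0:E3) δ, f s := by
    refine integral_mono_ae hgi hfi ?_
    have h0 : ∀ᵐ s : E3 ∂(volume.restrict (closedBall 0 δ)), s ≠ 0 :=
      ae_restrict_of_ae (by rw [ae_iff]; simpa using measure_singleton (0 : E3))
    have hsph : ∀ᵐ s : E3 ∂(volume.restrict (closedBall 0 δ)), ‖s‖ ≠ δ := by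
      refine ae_restrict_of_ae ?_
      rw [ae_iff]
      have : {s : E3 | ¬ ‖s‖ ≠ δ} = sphere (0:E3) δ := by
        ext s; simp [mem_sphere_iff_norm]
      rw [this]
      exact Measure.addHaar_sphere volume 0 δ
    filter_upwards [ae_restrict_mem measurableSet_closedBall, h0, hsph] with s hs hs0 hsδ
    have hsn : 0 < ‖s‖ := norm_pos_iff.2 hs0
    have hsδ' : ‖s‖ < δ := lt_of_le_of_ne (by simpa [dist_eq_norm] using hs) hsδ
    have hr : ‖s‖/δ ∈ Ioo (0:ℝ) 1 := ⟨div_pos hsn hδ0, (div_lt_one hδ0).2 hsδ'⟩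
    have hlb' := hlb _ hr
    have hcos : 0 ≤ 1 - Real.cos (inner ℝ ξ s : ℝ) := by
      nlinarith [Real.cos_le_one (inner ℝ ξ s : ℝ)]
    have heq : g s = δ ^ (-5:ℤ) * (m * (‖s‖/δ) ^ (-3-2*α)) * (1 - Real.cos (inner ℝ ξ s : ℝ)) := by
      have hsp : (‖s‖/δ) ^ (-3-2*α) = ‖s‖ ^ (-3-2*α) * δ ^ (-(-3-2*α)) := by
        rw [Real.div_rpow (norm_nonneg s) hδ0.le, Real.rpow_neg hδ0.le, div_eq_mul_inv]
      have hpow : δ ^ (2*α - 2) = δ ^ ((-5:ℝ)) * δ ^ (-(-3-2*α)) := by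
        rw [← Real.rpow_add hδ0]; congr 1; ring
      rw [hgd, hCgd, hsp, hδ5, hpow]; ring
    rw [heq, hfd]
    have hfactor : δ ^ (-5:ℤ) * (m * (‖s‖/δ) ^ (-3-2*α)) ≤ δ ^ (-5:ℤ) * ω (‖s‖/δ) :=
      mul_le_mul_of_nonneg_left hlb' hδ5pos.le
    exact mul_le_mul_of_nonneg_right hfactor hcos
  -- Step 5 : shrink the ball
  have hgnonneg : ∀ s : E3, 0 ≤ g s := by
    intro s
    have h1 : (0:ℝ) ≤ ‖s‖ ^ (-3-2*α) := Real.rpow_nonneg (norm_nonneg s) _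
    have h2 : 0 ≤ 1 - Real.cos (inner ℝ ξ s : ℝ) := by
      nlinarith [Real.cos_le_one (inner ℝ ξ s : ℝ)]
    rw [hgd]; positivity
  have hmono : ∫ s in closedBall (0:E3) a⁻¹, g s ≤ ∫ s in closedBall (0:E3) δ, g s :=
    setIntegral_mono_set hgi (ae_of_all _ hgnonneg)
      (HasSubset.Subset.eventuallyLE (closedBall_subset_closedBall hainv))
  -- Step 6/7 : scaling
  set e : E3 := a⁻¹ • ξ with hed
  have henorm : ‖e‖ = 1 := by
    rw [hed, norm_smul, Real.norm_eq_abs, abs_of_pos (inv_pos.2 ha0), ← ha, inv_mul_cancel₀ ha0.ne']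
  set F : E3 → ℝ := fun t => ‖t‖ ^ (-3-2*α) * (1 - Real.cos (inner ℝ ξ t : ℝ)) with hFd
  have hFsmul : ∀ x : E3, F (a⁻¹ • x) =
      (a⁻¹) ^ ((-3-2*α:ℝ)) * (‖x‖ ^ (-3-2*α) * (1 - Real.cos (inner ℝ e x : ℝ))) := by
    intro x
    have h1 : ‖a⁻¹ • x‖ = a⁻¹ * ‖x‖ := by
      rw [norm_smul, Real.norm_eq_abs, abs_of_pos (inv_pos.2 ha0)]
    have h2 : (inner ℝ ξ (a⁻¹ • x) : ℝ) = (inner ℝ e x : ℝ) := by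
      rw [hed, real_inner_smul_left, real_inner_smul_right]
    simp only [hFd]
    rw [h1, h2, Real.mul_rpow (inv_pos.2 ha0).le (norm_nonneg x)]
    ring
  have hscale := Measure.setIntegral_comp_smul_of_pos (volume : Measure E3) F
    (closedBall (0:E3) 1) (inv_pos.2 ha0)
  have hsmulball : a⁻¹ • closedBall (0:E3) 1 = closedBall (0:E3) a⁻¹ := by
    rw [_root_.smul_closedBall _ _ zero_le_one, smul_zero, Real.norm_eq_abs,
      abs_of_pos (inv_pos.2 ha0), mul_one]
  rw [hsmulball] at hscale
  have hIrot : ∫ t in closedBall (0:E3) 1, ‖t‖ ^ (-3-2*α) * (1 - Real.cos (inner ℝ e t : ℝ)) = C₀ :=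
    I_rot α e henorm
  have hLHS : ∫ x in closedBall (0:E3) 1, F (a⁻¹ • x) = (a⁻¹) ^ ((-3-2*α:ℝ)) * C₀ := by
    simp_rw [hFsmul]
    rw [integral_const_mul, hIrot]
  have hdim : Module.finrank ℝ E3 = 3 := finrank_euclideanSpace_fin
  rw [hLHS, hdim] at hscale
  have hapow : ((a⁻¹:ℝ) ^ (3:ℕ)) * (a⁻¹) ^ ((-3-2*α:ℝ)) = a ^ (2*α) := by
    rw [← Real.rpow_natCast (a⁻¹) 3, ← Real.rpow_add (inv_pos.2 ha0),
      Real.inv_rpow ha0.le, ← Real.rpow_neg ha0.le]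
    congr 1; push_cast; ring
  have hF_int : ∫ s in closedBall (0:E3) a⁻¹, F s = a ^ (2*α) * C₀ := by
    have hne : ((a⁻¹:ℝ) ^ (3:ℕ)) ≠ 0 := by positivity
    have := hscale
    rw [smul_eq_mul] at this
    -- this : (a⁻¹)^(-3-2α) * C₀ = ((a⁻¹)^3)⁻¹ * ∫ ...
    have h2 : ((a⁻¹:ℝ) ^ (3:ℕ)) * ((a⁻¹) ^ ((-3-2*α:ℝ)) * C₀) = ∫ s in closedBall (0:E3) a⁻¹, F s := by
      rw [this, ← mul_assoc, mul_inv_cancel₀ hne, one_mul]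
    rw [← h2, ← mul_assoc, hapow]
  have hg_small : ∫ s in closedBall (0:E3) a⁻¹, g s = Cg * (a ^ (2*α) * C₀) := by
    rw [hgd]
    rw [integral_const_mul]
    rw [show (fun s : E3 => ‖s‖ ^ (-3-2*α) * (1 - Real.cos (inner ℝ ξ s : ℝ))) = F from rfl, hF_int]
  -- final arithmetic
  have hfinal : m * C₀ * a ^ (2*α) / δ ^ (2-2*α) = Cg * (a ^ (2*α) * C₀) := by
    rw [hCgd]
    rw [show (2*α - 2 : ℝ) = -(2-2*α) by ring, Real.rpow_neg hδ0.le]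
    field_simp
  calc m * C₀ * a ^ (2*α) / δ ^ (2-2*α) = Cg * (a ^ (2*α) * C₀) := hfinal
    _ = ∫ s in closedBall (0:E3) a⁻¹, g s := hg_small.symm
    _ ≤ ∫ s in closedBall (0:E3) δ, g s := hmono
    _ ≤ ∫ s in closedBall (0:E3) δ, f s := hfg
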